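/- Fix integers k ≥ 2, n ≥ 1, 1 ≤ δ ≤ n, and 0 ≤ ε ≤ (k−1)n. For any pair of non-negative integers ε₁, ε₂ with ε₁ ≤ n and ε = (k−1)ε₁ + ε₂, one has |𝒫^{k,ε}_{n,δ}| = Σ_{i=1}^{δ} C(ε₁, δ−i) · |𝒫^{k,ε₂}_{n−ε₁, i}|. -/

import Mathlib

/-- A step of a lattice path: `E = (1,0)` or `N = (0,1)`. -/
inductive Step : Type
  | E | N
deriving DecidableEq, Repr

instance : Fintype Step :=
  ⟨{Step.E, Step.N}, fun x => by cases x <;> simp⟩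

/-- The terminal point of a lattice path starting at `(0,0)`. -/
def endpoint (γ : List Step) : ℤ × ℤ :=
  ((γ.count Step.E : ℤ), (γ.count Step.N : ℤ))

/-- The set of lattice points visited by a lattice path starting at `(0,0)`. -/
def vertices (γ : List Step) : Set (ℤ × ℤ) :=
  {p | ∃ i ≤ γ.length, endpoint (γ.take i) = p}

/-- The bottom-path condition: `γ = E N^{b₁} E N^{b₂} ⋯ E N^{b_m}` where every
`bᵢ ≡ k - 2 (mod k - 1)`. -/
def kGoodBottom (k : ℕ) (γ : List Step) : Prop :=
  ∃ bs : List ℕ, (∀ b ∈ bs, b % (k - 1) = (k - 2) % (k - 1)) ∧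
    γ = (bs.map fun b => Step.E :: List.replicate b Step.N).flatten

/-- `γ₁` stays weakly above `γ₂`: no visited point of `γ₂` lies strictly above a
visited point of `γ₁` with the same `x`-coordinate. -/
def weaklyAbove (γ₁ γ₂ : List Step) : Prop :=
  ∀ p ∈ vertices γ₁, ∀ q ∈ vertices γ₂, p.1 = q.1 → q.2 ≤ p.2

/-- The set `𝒫^{k,ε}_{n,δ}` of `k`-path pairs of length `((k-1)n - ε, (k-1)n)`
and distance `δ`. -/
def PathPairs (k n ε δ : ℕ) : Set (List Step × List Step) :=
  {p | p.1.length = (k - 1) * n - ε ∧ p.1.head? = some Step.N ∧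
       p.2.length = (k - 1) * n ∧ p.2.head? = some Step.E ∧
       (∀ q ∈ vertices p.1 ∩ vertices p.2, q = ((0 : ℤ), (0 : ℤ))) ∧
       (endpoint p.2).1 - (endpoint p.1).1 = (δ : ℤ) ∧
       kGoodBottom k p.2}

/-- The set `𝒫̃^{k,ε}_{n,δ,m}` of weak `k`-path pairs of distance `δ` with
exactly `m` returns (intersections away from the origin). -/
def WeakPathPairs (k n ε δ m : ℕ) : Set (List Step × List Step) :=
  {p | p.1.length = (k - 1) * n - ε ∧ p.1.head? = some Step.N ∧
       p.2.length = (k - 1) * n ∧ p.2.head? = some Step.E ∧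
       weaklyAbove p.1 p.2 ∧
       (endpoint p.2).1 - (endpoint p.1).1 = (δ : ℤ) ∧
       kGoodBottom k p.2 ∧
       ((vertices p.1 ∩ vertices p.2) \ {((0 : ℤ), (0 : ℤ))}).ncard = m}

/-- The generating function `C_k(t) = ∑_{n≥0} (1/(kn+1)) C(kn+1, n) tⁿ` of the
`k`-Catalan (Fuss–Catalan) numbers, as a formal power series over `ℚ`. -/
def fussCatalanGF (k : ℕ) : PowerSeries ℚ :=
  PowerSeries.mk fun n => (((k * n + 1 : ℕ) : ℚ))⁻¹ * ((k * n + 1).choose n : ℚ)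

-- basic count lemmas
lemma count_E_add_count_N (l : List Step) : l.count Step.E + l.count Step.N = l.length := by
  induction l with
  | nil => simp
  | cons a t ih => cases a <;> simp [List.count_cons] <;> omega

lemma count_take_mono (l : List Step) (s : Step) {i j : ℕ} (h : i ≤ j) :
    (l.take i).count s ≤ (l.take j).count s :=
  ((List.take_prefix_take_left (l := l) h).sublist).count_le s

lemma count_take_succ_le (l : List Step) (s : Step) (i : ℕ) :
    (l.take (i+1)).count s ≤ (l.take i).count s + 1 := by
  rw [List.take_succ, List.count_append]
  cases h : l[i]?
  · simp [h]
  · simp [h, List.count_singleton']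
    split <;> omega

lemma unit_ivt (f : ℕ → ℕ) (mono : ∀ ⦃i j⦄, i ≤ j → f i ≤ f j)
    (step : ∀ i, f (i+1) ≤ f i + 1) {a b y : ℕ} (hab : a ≤ b)
    (h1 : f a ≤ y) (h2 : y ≤ f b) : ∃ i, a ≤ i ∧ i ≤ b ∧ f i = y := by
  induction b with
  | zero =>
    have ha : a = 0 := Nat.le_zero.mp hab
    subst ha
    exact ⟨0, le_refl _, le_refl _, by omega⟩
  | succ b ih =>
    rcases Nat.lt_or_ge y (f (b+1)) with hy | hy
    · have hab' : a ≤ b := by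
        rcases Nat.lt_or_ge a (b+1) with h | h
        · omega
        · exfalso; have := mono (show b+1 ≤ a by omega); omega
      have h2' : y ≤ f b := by have := step b; omega
      obtain ⟨i, h⟩ := ih hab' h2'
      exact ⟨i, h.1, by omega, h.2.2⟩
    · exact ⟨b+1, hab, le_refl _, by omega⟩

lemma mem_vertices (γ : List Step) (q : ℤ × ℤ) :
    q ∈ vertices γ ↔ ∃ i ≤ γ.length,
      (((γ.take i).count Step.E : ℤ), ((γ.take i).count Step.N : ℤ)) = q := Iff.rfl

lemma vertices_fst_bound {γ : List Step} {q : ℤ × ℤ} (h : q ∈ vertices γ) :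
    0 ≤ q.1 ∧ q.1 ≤ (γ.count Step.E : ℤ) := by
  obtain ⟨i, hi, hq⟩ := h
  have h1 : (γ.take i).count Step.E ≤ γ.count Step.E := (γ.take_sublist i).count_le _
  simp only [endpoint] at hq
  rw [← hq]
  refine ⟨by positivity, ?_⟩
  simpa using (show ((γ.take i).count Step.E : ℤ) ≤ (γ.count Step.E : ℤ) by exact_mod_cast h1)

lemma vertices_prefix_subset (l t : List Step) : vertices l ⊆ vertices (l ++ t) := by
  rintro q ⟨i, hi, hq⟩
  exact ⟨i, by simp; omega, by rwa [List.take_append_of_le_length hi]⟩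

lemma mem_vertices_append {l t : List Step} {q : ℤ × ℤ} (h : q ∈ vertices (l ++ t)) :
    q ∈ vertices l ∨ ∃ i, 1 ≤ i ∧ i ≤ t.length ∧
      q.1 = ((l.count Step.E + (t.take i).count Step.E : ℕ) : ℤ) := by
  obtain ⟨i, hi, hq⟩ := h
  rcases Nat.lt_or_ge i (l.length + 1) with h' | h'
  · left; exact ⟨i, by omega, by rwa [List.take_append_of_le_length (by omega)] at hq⟩
  · right
    rw [List.length_append] at hi
    refine ⟨i - l.length, by omega, by omega, ?_⟩
    rw [List.take_append, List.take_of_length_le (by omega)] at hq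
    rw [← hq]
    simp [endpoint, List.count_append]

lemma no_distance_zero (γ₁ γ₂ : List Step)
    (h2 : γ₁.head? = some Step.N) (h4 : γ₂.head? = some Step.E)
    (hlen : γ₁.length ≤ γ₂.length)
    (hx : γ₁.count Step.E = γ₂.count Step.E)
    (h5 : ∀ q ∈ vertices γ₁ ∩ vertices γ₂, q = ((0 : ℤ), (0 : ℤ))) : False := by
  set e₁ : ℕ → ℕ := fun i => (γ₁.take i).count Step.E with he₁
  set n₁ : ℕ → ℕ := fun i => (γ₁.take i).count Step.N with hn₁
  set e₂ : ℕ → ℕ := fun i => (γ₂.take i).count Step.E with he₂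
  set n₂ : ℕ → ℕ := fun i => (γ₂.take i).count Step.N with hn₂
  have e₁mono : ∀ ⦃i j : ℕ⦄, i ≤ j → e₁ i ≤ e₁ j := fun i j h => count_take_mono _ _ h
  have n₁mono : ∀ ⦃i j : ℕ⦄, i ≤ j → n₁ i ≤ n₁ j := fun i j h => count_take_mono _ _ h
  have e₂mono : ∀ ⦃i j : ℕ⦄, i ≤ j → e₂ i ≤ e₂ j := fun i j h => count_take_mono _ _ h
  have n₂mono : ∀ ⦃i j : ℕ⦄, i ≤ j → n₂ i ≤ n₂ j := fun i j h => count_take_mono _ _ h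
  have e₁step : ∀ i, e₁ (i+1) ≤ e₁ i + 1 := fun i => count_take_succ_le _ _ i
  have n₂step : ∀ i, n₂ (i+1) ≤ n₂ i + 1 := fun i => count_take_succ_le _ _ i
  have e₂step : ∀ i, e₂ (i+1) ≤ e₂ i + 1 := fun i => count_take_succ_le _ _ i
  obtain ⟨t₁, rfl⟩ : ∃ t, γ₁ = Step.N :: t := by
    cases γ₁ with
    | nil => simp at h2
    | cons a t => exact ⟨t, by simp at h2; rw [h2]⟩
  obtain ⟨t₂, rfl⟩ : ∃ t, γ₂ = Step.E :: t := by
    cases γ₂ with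
    | nil => simp at h4
    | cons a t => exact ⟨t, by simp at h4; rw [h4]⟩
  set X : ℕ := (Step.E :: t₂).count Step.E with hX
  have hX1 : 1 ≤ X := by simp [hX, List.count_cons]
  have e₂len : e₂ (Step.E :: t₂).length = X := by simp [he₂, hX]
  have e₁len : e₁ (Step.N :: t₁).length = X := by
    simp only [he₁, List.take_length]; exact hx
  have e₂zero : e₂ 0 = 0 := by simp [he₂]
  have e₁zero : e₁ 0 = 0 := by simp [he₁]
  have e₂one : e₂ 1 = 1 := by simp [he₂, List.count_cons]
  have n₁one : n₁ 1 = 1 := by simp [hn₁, List.count_cons]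
  -- jmax
  classical
  set jmax : ℕ → ℕ := fun x => Nat.findGreatest (fun j => e₂ j = x) (Step.E :: t₂).length with hjm
  have jmax_le : ∀ x, jmax x ≤ (Step.E :: t₂).length := fun x => Nat.findGreatest_le _
  have jmax_spec : ∀ x ≤ X, e₂ (jmax x) = x := by
    intro x hxle
    obtain ⟨j, _, hj2, hj3⟩ := unit_ivt e₂ e₂mono e₂step (y := x) (Nat.zero_le _)
      (by rw [e₂zero]; exact Nat.zero_le x) (by rw [e₂len]; exact hxle)
    exact Nat.findGreatest_spec (P := fun j => e₂ j = x) hj2 hj3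
  have jmax_max : ∀ x j, j ≤ (Step.E :: t₂).length → e₂ j = x → j ≤ jmax x :=
    fun x j hj hej => Nat.le_findGreatest hj hej
  -- main induction
  have H : ∀ x, 1 ≤ x → x ≤ X → ∀ i ≤ (Step.N :: t₁).length, e₁ i = x →
      n₂ (jmax x) < n₁ i := by
    intro x
    induction x using Nat.strong_induction_on with
    | _ x IH =>
      intro hx1 hxX i hi hei
      have hi1 : 1 ≤ i := by
        by_contra h
        have : i = 0 := by omega
        rw [this, e₁zero] at hei; omega
      -- lower bound: n₂ (jmax (x-1)) < n₁ i
      have hlow : n₂ (jmax (x-1)) < n₁ i := by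
        rcases Nat.eq_or_lt_of_le hx1 with h1 | h2
        · -- x = 1
          have hx0 : x - 1 = 0 := by omega
          have hj0 : jmax 0 = 0 := by
            by_contra h
            have h1' : 1 ≤ jmax 0 := by omega
            have := e₂mono h1'
            rw [e₂one, jmax_spec 0 (Nat.zero_le _)] at this
            omega
          rw [hx0, hj0]
          have h1' : n₁ 1 ≤ n₁ i := n₁mono hi1
          rw [n₁one] at h1'
          have h2' : n₂ 0 = 0 := by simp [hn₂]
          omega
        · -- x ≥ 2
          obtain ⟨i', _, hi'2, hi'3⟩ := unit_ivt e₁ e₁mono e₁step (y := x - 1) (Nat.zero_le i)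
            (by rw [e₁zero]; exact Nat.zero_le _) (by rw [hei]; omega)
          have := IH (x-1) (by omega) (by omega) (by omega) i' (le_trans hi'2 hi) hi'3
          exact lt_of_lt_of_le this (n₁mono hi'2)
      by_contra hcon
      push_neg at hcon
      have hj01 : jmax (x-1) ≤ jmax x := by
        by_contra h
        push_neg at h
        have := e₂mono (le_of_lt h)
        rw [jmax_spec (x-1) (by omega), jmax_spec x hxX] at this
        omega
      obtain ⟨j, hj1, hj2, hj3⟩ := unit_ivt n₂ n₂mono n₂step (y := n₁ i) hj01
        (le_of_lt hlow) hcon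
      have hej : e₂ j = x := by
        have hle : e₂ j ≤ x := by
          have := e₂mono hj2; rwa [jmax_spec x hxX] at this
        have hge : x - 1 ≤ e₂ j := by
          have := e₂mono hj1; rwa [jmax_spec (x-1) (by omega)] at this
        rcases Nat.eq_or_lt_of_le hle with h | h
        · exact h
        · exfalso
          have : j ≤ jmax (x-1) := jmax_max (x-1) j (le_trans hj2 (jmax_le x)) (by omega)
          have hjeq : j = jmax (x-1) := le_antisymm this hj1
          rw [hjeq] at hj3
          omega
      -- common point
      have hq1 : ((x : ℤ), (n₁ i : ℤ)) ∈ vertices (Step.N :: t₁) := by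
        refine ⟨i, hi, ?_⟩
        simp only [endpoint, Prod.mk.injEq, Nat.cast_inj]
        exact ⟨hei, rfl⟩
      have hq2 : ((x : ℤ), (n₁ i : ℤ)) ∈ vertices (Step.E :: t₂) := by
        refine ⟨j, le_trans hj2 (jmax_le x), ?_⟩
        simp only [endpoint, Prod.mk.injEq, Nat.cast_inj]
        exact ⟨hej, hj3⟩
      have := h5 _ ⟨hq1, hq2⟩
      have : (x : ℤ) = 0 := congrArg Prod.fst this
      omega
  -- conclusion
  have hfin := H X hX1 (le_refl X) (Step.N :: t₁).length (le_refl _) e₁len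
  have hjX : jmax X = (Step.E :: t₂).length :=
    le_antisymm (jmax_le X) (jmax_max X _ (le_refl _) e₂len)
  rw [hjX] at hfin
  have c1 := count_E_add_count_N (Step.N :: t₁)
  have c2 := count_E_add_count_N (Step.E :: t₂)
  have hn1 : n₁ (Step.N :: t₁).length = (Step.N :: t₁).count Step.N := by simp [hn₁]
  have hn2 : n₂ (Step.E :: t₂).length = (Step.E :: t₂).count Step.N := by simp [hn₂]
  rw [hn1, hn2] at hfin
  omega
local notation "blk" => fun b => Step.E :: List.replicate b Step.N

lemma mem_pathPairs {k n ε δ : ℕ} {γ₁ γ₂ : List Step}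
    (h1 : γ₁.length = (k-1)*n - ε) (h2 : γ₁.head? = some Step.N)
    (h3 : γ₂.length = (k-1)*n) (h4 : γ₂.head? = some Step.E)
    (h5 : ∀ q ∈ vertices γ₁ ∩ vertices γ₂, q = ((0:ℤ),(0:ℤ)))
    (h6 : (endpoint γ₂).1 - (endpoint γ₁).1 = (δ:ℤ))
    (h7 : kGoodBottom k γ₂) : (γ₁, γ₂) ∈ PathPairs k n ε δ :=
  ⟨h1, h2, h3, h4, h5, h6, h7⟩

lemma pathPairs_finite (k n ε δ : ℕ) : (PathPairs k n ε δ).Finite := by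
  apply Set.Finite.subset
    (Set.Finite.prod (List.finite_length_eq Step ((k-1)*n-ε)) (List.finite_length_eq Step ((k-1)*n)))
  rintro ⟨a, b⟩ ⟨h1, _, h3, _⟩
  exact ⟨h1, h3⟩

lemma pathPairs_empty_left {k n ε δ : ℕ} (h : (k-1)*n ≤ ε) : PathPairs k n ε δ = ∅ := by
  ext p
  simp only [PathPairs, Set.mem_setOf_eq, Set.mem_empty_iff_false, iff_false]
  rintro ⟨h1, h2, -⟩
  have : p.1 = [] := List.length_eq_zero_iff.mp (by omega)
  rw [this] at h2
  simp at h2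

lemma pathPairs_empty_right {k n ε δ : ℕ} (h : (k-1)*n = 0) : PathPairs k n ε δ = ∅ := by
  ext p
  simp only [PathPairs, Set.mem_setOf_eq, Set.mem_empty_iff_false, iff_false]
  rintro ⟨-, -, h3, h4, -⟩
  have : p.2 = [] := List.length_eq_zero_iff.mp (by omega)
  rw [this] at h4
  simp at h4

lemma pathPairs_delta_zero {k n ε : ℕ} : PathPairs k n ε 0 = ∅ := by
  ext ⟨γ₁, γ₂⟩
  simp only [PathPairs, Set.mem_setOf_eq, Set.mem_empty_iff_false, iff_false]
  rintro ⟨h1, h2, h3, h4, h5, h6, -⟩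
  have hx : γ₁.count Step.E = γ₂.count Step.E := by
    simp only [endpoint] at h6; omega
  have hlen : γ₁.length ≤ γ₂.length := by omega
  exact no_distance_zero γ₁ γ₂ h2 h4 hlen hx h5

lemma kGood_decomp {k : ℕ} {γ : List Step} (hγ : γ ≠ []) (h : kGoodBottom k γ) :
    ∃ bs' b, (∀ b' ∈ bs', b' % (k-1) = (k-2) % (k-1)) ∧ b % (k-1) = (k-2) % (k-1) ∧
      γ = (List.map blk bs').flatten ++ (Step.E :: List.replicate b Step.N) := by
  obtain ⟨bs, hmod, rfl⟩ := h
  rcases List.eq_nil_or_concat bs with rfl | ⟨bs', b, rfl⟩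
  · simp at hγ
  · refine ⟨bs', b, fun b' hb' => hmod b' (by simp [List.concat_eq_append, hb']),
      hmod b (by simp [List.concat_eq_append]), ?_⟩
    simp

set_option maxRecDepth 10000 in
lemma kGood_append_N {k : ℕ} {γ : List Step} (hk : 2 ≤ k) (hγ : γ ≠ [])
    (h : kGoodBottom k γ) : kGoodBottom k (γ ++ List.replicate (k-1) Step.N) := by
  obtain ⟨bs', b, hmod', hmodb, rfl⟩ := kGood_decomp hγ h
  refine ⟨bs'.concat (b + (k-1)), ?_, ?_⟩
  · intro b' hb'
    simp only [List.concat_eq_append, List.mem_append, List.mem_singleton] at hb'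
    rcases hb' with h' | h'
    · exact hmod' b' h'
    · rw [h', Nat.add_mod_right]
      exact hmodb
  · simp only [List.flatten, List.concat_eq_append, List.map_append, List.flatten_append,
      List.map_cons, List.map_nil, List.flatten_cons, List.flatten_nil, List.append_nil]
    rw [List.replicate_add]
    simp [List.append_assoc]

lemma kGood_append_E {k : ℕ} {γ : List Step} (h : kGoodBottom k γ) :
    kGoodBottom k (γ ++ Step.E :: List.replicate (k-2) Step.N) := by
  obtain ⟨bs, hmod, rfl⟩ := h
  refine ⟨bs.concat (k-2), ?_, by simp⟩
  intro b' hb'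
  simp only [List.concat_eq_append, List.mem_append, List.mem_singleton] at hb'
  rcases hb' with h' | h'
  · exact hmod b' h'
  · rw [h']

lemma step_lemma (k m ε δ : ℕ) (hk : 2 ≤ k) (hm : 1 ≤ m) (hε1 : k - 1 ≤ ε)
    (hε2 : ε ≤ (k-1)*m) (hδ : 1 ≤ δ) :
    (PathPairs k m ε δ).ncard =
      (PathPairs k (m-1) (ε-(k-1)) δ).ncard + (PathPairs k (m-1) (ε-(k-1)) (δ-1)).ncard := by
  obtain ⟨m', rfl⟩ : ∃ m', m = m' + 1 := ⟨m - 1, by omega⟩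
  simp only [Nat.add_sub_cancel]
  rcases Nat.eq_zero_or_pos m' with rfl | hm' 
  · -- m = 1 : everything empty
    rw [pathPairs_empty_left (by omega), pathPairs_empty_right (by ring),
      pathPairs_empty_right (by ring)]
    simp
  have hT : (k-1)*(m'+1) = (k-1)*m' + (k-1) := by ring
  have hTpos : 1 ≤ (k-1)*m' := Nat.mul_pos (by omega) hm'
  set A := PathPairs k m' (ε-(k-1)) δ with hA
  set B := PathPairs k m' (ε-(k-1)) (δ-1) with hB
  set g₁ : List Step × List Step → List Step × List Step :=
    fun p => (p.1, p.2 ++ List.replicate (k-1) Step.N) with hg₁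
  set g₂ : List Step × List Step → List Step × List Step :=
    fun p => (p.1, p.2 ++ Step.E :: List.replicate (k-2) Step.N) with hg₂
  have hset : PathPairs k (m'+1) ε δ = g₁ '' A ∪ g₂ '' B := by
    apply Set.Subset.antisymm
    · rintro ⟨γ₁, γ₂⟩ ⟨p1, p2, p3, p4, p5, p6, p7⟩
      have hγ₂ne : γ₂ ≠ [] := by
        intro h
        rw [h] at p3
        simp at p3
        omega
      obtain ⟨bs', b, hmod', hmodb, rfl⟩ := kGood_decomp hγ₂ne p7
      set W := (List.map blk bs').flatten with hW
      have hlen : W.length + (b + 1) = (k-1)*(m'+1) := by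
        simpa using p3
      by_cases hb : k - 1 ≤ b
      · -- last run long: in image of g₁
        left
        set γ₂' := W ++ (Step.E :: List.replicate (b - (k-1)) Step.N) with hγ₂'
        have hγ₂'ne : γ₂' ≠ [] := by simp [hγ₂']
        have heq : W ++ (Step.E :: List.replicate b Step.N) = γ₂' ++ List.replicate (k-1) Step.N := by
          rw [hγ₂', List.append_assoc]
          congr 1
          simp only [List.cons_append]
          congr 1
          rw [← List.replicate_add]
          congr 1
          omega
        refine ⟨(γ₁, γ₂'), ⟨p1.trans (by omega), p2, ?_, ?_, ?_, ?_, ?_⟩, ?_⟩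
        · simp [hγ₂']
          omega
        · rw [heq, List.head?_append_of_ne_nil _ hγ₂'ne] at p4
          exact p4
        · intro q hq
          exact p5 q ⟨hq.1, heq ▸ vertices_prefix_subset _ _ hq.2⟩
        · have hcount : γ₂'.count Step.E = (W ++ (Step.E :: List.replicate b Step.N)).count Step.E := by
            simp [hγ₂', List.count_append, List.count_cons, List.count_replicate]
          simp only [endpoint] at p6 ⊢
          rw [hcount]
          exact p6
        · refine ⟨bs'.concat (b - (k-1)), ?_, by simp [hγ₂', hW]⟩
          intro b' hb'
          simp only [List.concat_eq_append, List.mem_append, List.mem_singleton] at hb'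
          rcases hb' with h' | h'
          · exact hmod' b' h'
          · rw [h']
            have h1 : b - (k-1) + (k-1) = b := by omega
            calc (b - (k-1)) % (k-1) = (b - (k-1) + (k-1)) % (k-1) := (Nat.add_mod_right _ _).symm
              _ = (k-2) % (k-1) := by rw [h1]; exact hmodb
        · simp only [hg₁, Prod.mk.injEq]
          exact ⟨trivial, heq.symm⟩
      · -- last run short: b = k - 2, in image of g₂
        right
        have hbeq : b = k - 2 := by
          have h1 : b % (k-1) = b := Nat.mod_eq_of_lt (by omega)
          have h2 : (k-2) % (k-1) = k-2 := Nat.mod_eq_of_lt (by omega)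
          omega
        have hWne : W ≠ [] := by
          intro h
          rw [h] at hlen
          simp at hlen
          omega
        refine ⟨(γ₁, W), ⟨p1.trans (by omega), p2, by show W.length = (k-1)*m'; omega, ?_, ?_, ?_, ?_⟩, ?_⟩
        · rw [List.head?_append_of_ne_nil _ hWne] at p4
          exact p4
        · intro q hq
          exact p5 q ⟨hq.1, vertices_prefix_subset _ _ hq.2⟩
        · have hcount : (W ++ (Step.E :: List.replicate b Step.N)).count Step.E
              = W.count Step.E + 1 := by
            simp [List.count_append, List.count_cons, List.count_replicate]
          simp only [endpoint] at p6 ⊢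
          rw [hcount] at p6
          omega
        · exact ⟨bs', hmod', rfl⟩
        · simp only [hg₂, Prod.mk.injEq]
          exact ⟨trivial, by rw [hbeq]⟩
    · rintro p (⟨⟨γ₁, γ₂⟩, ⟨a1, a2, a3, a4, a5, a6, a7⟩, rfl⟩ | ⟨⟨γ₁, γ₂⟩, ⟨a1, a2, a3, a4, a5, a6, a7⟩, rfl⟩)
      · have hγ₂ne : γ₂ ≠ [] := by
          intro h; rw [h] at a4; simp at a4
        show (γ₁, γ₂ ++ List.replicate (k-1) Step.N) ∈ PathPairs k (m'+1) ε δ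
        refine mem_pathPairs (a1.trans (by omega)) a2 (by simp [a3]; omega)
          (by rwa [List.head?_append_of_ne_nil _ hγ₂ne]) ?_ ?_ (kGood_append_N hk hγ₂ne a7)
        · intro q ⟨hq1, hq2⟩
          rcases mem_vertices_append hq2 with old | ⟨i, hi1, hi2, hq⟩
          · exact a5 q ⟨hq1, old⟩
          · exfalso
            have hfst := (vertices_fst_bound hq1).2
            have hc : (List.count Step.E ((List.replicate (k-1) Step.N).take i)) = 0 := by
              simp [List.take_replicate, List.count_replicate]
            rw [hc] at hq
            have a6' : ((γ₂.count Step.E : ℤ)) - ((γ₁.count Step.E : ℤ)) = ((δ : ℕ) : ℤ) := a6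
            omega
        · have hc : (List.count Step.E (List.replicate (k-1) Step.N)) = 0 := by
            simp [List.count_replicate]
          simp only [endpoint, List.count_append, hc] at a6 ⊢
          omega
      · have hγ₂ne : γ₂ ≠ [] := by
          intro h; rw [h] at a4; simp at a4
        show (γ₁, γ₂ ++ Step.E :: List.replicate (k-2) Step.N) ∈ PathPairs k (m'+1) ε δ
        refine mem_pathPairs (a1.trans (by omega)) a2 (by simp [a3]; omega)
          (by rwa [List.head?_append_of_ne_nil _ hγ₂ne]) ?_ ?_ (kGood_append_E a7)
        · intro q ⟨hq1, hq2⟩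
          rcases mem_vertices_append hq2 with old | ⟨i, hi1, hi2, hq⟩
          · exact a5 q ⟨hq1, old⟩
          · exfalso
            obtain ⟨i', rfl⟩ : ∃ i', i = i' + 1 := ⟨i - 1, by omega⟩
            have hfst := (vertices_fst_bound hq1).2
            have hc : (List.count Step.E ((Step.E :: List.replicate (k-2) Step.N).take (i'+1))) = 1 := by
              simp [List.take_succ_cons, List.count_cons, List.take_replicate, List.count_replicate]
            rw [hc] at hq
            have a6' : ((γ₂.count Step.E : ℤ)) - ((γ₁.count Step.E : ℤ)) = ((δ - 1 : ℕ) : ℤ) := a6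
            omega
        · have hc : (List.count Step.E (Step.E :: List.replicate (k-2) Step.N)) = 1 := by
            simp [List.count_cons, List.count_replicate]
          simp only [endpoint, List.count_append, hc] at a6 ⊢
          omega
  have hAfin : A.Finite := pathPairs_finite _ _ _ _
  have hBfin : B.Finite := pathPairs_finite _ _ _ _
  have hinj₁ : Set.InjOn g₁ A := by
    rintro ⟨a1, a2⟩ - ⟨b1, b2⟩ - h
    simp only [hg₁, Prod.mk.injEq] at h
    exact Prod.ext h.1 (List.append_cancel_right h.2)
  have hinj₂ : Set.InjOn g₂ B := by
    rintro ⟨a1, a2⟩ - ⟨b1, b2⟩ - h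
    simp only [hg₂, Prod.mk.injEq] at h
    exact Prod.ext h.1 (List.append_cancel_right h.2)
  have hdisj : Disjoint (g₁ '' A) (g₂ '' B) := by
    rw [Set.disjoint_left]
    rintro p ⟨⟨a1, a2⟩, haA, rfl⟩ ⟨⟨b1, b2⟩, hbB, heq⟩
    have hlena : a2.length = (k-1)*m' := haA.2.2.1
    have hlenb : b2.length = (k-1)*m' := hbB.2.2.1
    simp only [hg₁, hg₂, Prod.mk.injEq] at heq
    have := (List.append_inj' heq.2.symm (by simp; omega)).2
    have hk1 : k - 1 = (k-2) + 1 := by omega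
    rw [hk1, List.replicate_succ] at this
    simp at this
  rw [hset, Set.ncard_union_eq hdisj (hAfin.image _) (hBfin.image _),
    Set.ncard_image_of_injOn hinj₁, Set.ncard_image_of_injOn hinj₂]


/-- Proposition 2.4: the summation decomposition of `|𝒫^{k,ε}_{n,δ}|` for any
decomposition `ε = (k-1)ε₁ + ε₂`. -/
theorem kPathPair_decomposition (k n ε δ ε₁ ε₂ : ℕ) (hk : 2 ≤ k) (hn : 1 ≤ n)
    (hδ : 1 ≤ δ) (hδn : δ ≤ n) (hε : ε ≤ (k - 1) * n) (hε₁ : ε₁ ≤ n)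
    (hdecomp : ε = (k - 1) * ε₁ + ε₂) :
    (PathPairs k n ε δ).ncard =
      ∑ i ∈ Finset.Icc 1 δ, ε₁.choose (δ - i) * (PathPairs k (n - ε₁) ε₂ i).ncard := by
  induction ε₁ generalizing ε ε₂ with
  | zero =>
    have hε₂ : ε₂ = ε := by omega
    subst hε₂
    rw [Finset.sum_eq_single δ]
    · simp
    · intro i hi hne
      rw [Finset.mem_Icc] at hi
      rw [Nat.choose_eq_zero_of_lt (by omega)]
      ring
    · intro h
      exact absurd (Finset.mem_Icc.mpr ⟨hδ, le_refl δ⟩) h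
  | succ ε₁ IH =>
    have h2 : (k-1)*(ε₁+1) = (k-1)*ε₁ + (k-1) := by ring
    have h1 : (k-1)*(n-ε₁) + (k-1)*ε₁ = (k-1)*n := by rw [← Nat.mul_add]; congr 1; omega
    have h1' : (k-1)*(n-(ε₁+1)) + (k-1)*(ε₁+1) = (k-1)*n := by rw [← Nat.mul_add]; congr 1; omega
    rw [IH ε (ε₂ + (k-1)) hε (by omega) (by rw [hdecomp]; ring)]
    have hstep : ∀ i ∈ Finset.Icc 1 δ, (PathPairs k (n-ε₁) (ε₂+(k-1)) i).ncard
        = (PathPairs k (n-(ε₁+1)) ε₂ i).ncard + (PathPairs k (n-(ε₁+1)) ε₂ (i-1)).ncard := by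
      intro i hi
      rw [Finset.mem_Icc] at hi
      have hs := step_lemma k (n-ε₁) (ε₂+(k-1)) i hk (by omega) (by omega) (by omega) hi.1
      rw [Nat.add_sub_cancel, Nat.sub_sub] at hs
      exact hs
    set F : ℕ → ℕ := fun i => (PathPairs k (n-(ε₁+1)) ε₂ i).ncard with hF
    calc ∑ i ∈ Finset.Icc 1 δ, ε₁.choose (δ - i) * (PathPairs k (n-ε₁) (ε₂+(k-1)) i).ncard
        = ∑ i ∈ Finset.Icc 1 δ, (ε₁.choose (δ - i) * F i + ε₁.choose (δ - i) * F (i-1)) :=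
          Finset.sum_congr rfl (fun i hi => by rw [hstep i hi, Nat.mul_add])
      _ = ∑ i ∈ Finset.Icc 1 δ, ε₁.choose (δ - i) * F i
            + ∑ i ∈ Finset.Icc 1 δ, ε₁.choose (δ - i) * F (i-1) := Finset.sum_add_distrib
      _ = ∑ i ∈ Finset.Icc 1 δ, ε₁.choose (δ - i) * F i
            + ∑ i ∈ Finset.Icc 1 δ, (if i = δ then 0 else ε₁.choose (δ - (i+1)) * F i) := by
          congr 1
          have hm : Finset.Icc 1 δ = Finset.map (addRightEmbedding 1) (Finset.Icc 0 (δ-1)) := by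
            rw [Finset.map_add_right_Icc]
            congr 1 <;> omega
          have hstep2 : ∀ j ∈ Finset.Icc 0 (δ-1),
              ε₁.choose (δ - (addRightEmbedding 1 j)) * F (addRightEmbedding 1 j - 1)
                = ε₁.choose (δ - (j+1)) * F j := by
            intro j hj
            simp [addRightEmbedding]
          have hins : Finset.Icc 0 (δ-1) = insert 0 (Finset.Icc 1 (δ-1)) := by
            ext x
            simp only [Finset.mem_Icc, Finset.mem_insert]
            omega
          have hF0 : F 0 = 0 := by
            rw [hF]
            simp only [pathPairs_delta_zero]
            exact Set.ncard_empty _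
          calc ∑ i ∈ Finset.Icc 1 δ, ε₁.choose (δ - i) * F (i-1)
              = ∑ j ∈ Finset.Icc 0 (δ-1), ε₁.choose (δ - (j+1)) * F j := by
                conv_lhs => rw [hm]
                rw [Finset.sum_map]
                exact Finset.sum_congr rfl hstep2
            _ = ∑ j ∈ Finset.Icc 1 (δ-1), ε₁.choose (δ - (j+1)) * F j := by
                rw [hins, Finset.sum_insert (by simp), hF0]
                simp
            _ = ∑ j ∈ Finset.Icc 1 (δ-1), (if j = δ then 0 else ε₁.choose (δ-(j+1)) * F j) :=
                Finset.sum_congr rfl (fun j hj => by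
                  rw [Finset.mem_Icc] at hj
                  rw [if_neg (by omega)])
            _ = ∑ i ∈ Finset.Icc 1 δ, (if i = δ then 0 else ε₁.choose (δ-(i+1)) * F i) := by
                apply Finset.sum_subset (Finset.Icc_subset_Icc_right (by omega))
                intro x hx hnx
                rw [Finset.mem_Icc] at hx
                have hxd : x = δ := by
                  by_contra hc
                  exact hnx (Finset.mem_Icc.mpr ⟨hx.1, by omega⟩)
                simp [hxd]
      _ = ∑ i ∈ Finset.Icc 1 δ, (ε₁+1).choose (δ - i) * F i := by
          rw [← Finset.sum_add_distrib]
          apply Finset.sum_congr rfl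
          intro i hi
          rw [Finset.mem_Icc] at hi
          rcases eq_or_lt_of_le hi.2 with heq | hlt
          · rw [if_pos heq, heq]
            simp
          · rw [if_neg (by omega)]
            have hd1 : δ - i = (δ - i - 1) + 1 := by omega
            have hd2 : δ - (i+1) = δ - i - 1 := by omega
            rw [hd1, hd2, Nat.choose_succ_succ]
            ring
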